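/- Let H be a positive self-adjoint operator with discrete spectrum {λ_j} (nondecreasing) satisfying Σ_j λ_j^{-γ/(1-γ)} < ∞ for some γ ∈ (0,1), and let β be convex with β(0)=0, β continuous on [0,N], and |β(x)| ≤ C x^γ for x ∈ [0, x̄]. Then for any density operator ρ with eigenvalues {ρ_j} (nonincreasing, ρ₀ ≤ N) and finite energy E = Σ_j λ_j ρ_j, one has Σ_j |β(ρ_j)| ≤ N_a · max_{[0,N]}|β| + C' E^γ, where N_a is the number of eigenvalues of ρ exceeding x̄ and C' depends only on C, γ and Σ_j λ_j^{-γ/(1-γ)}. -/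

import Mathlib

set_option maxHeartbeats 1000000 in
/-- Control of the entropy by the energy: if `|β(x)| ≤ C x^γ` near `0`,
`Σ_j λ_j^{-γ/(1-γ)} < ∞`, and `ρ_j` is nonincreasing with `ρ_j ≤ x̄` for `j ≥ N_a`, then
`Σ_j |β(ρ_j)| ≤ N_a · max_{[0,N]}|β| + C E^γ (Σ_j λ_j^{-γ/(1-γ)})^{1-γ}` where
`E = Σ_j λ_j ρ_j`, by Hölder's inequality. -/
theorem stmt7 (N xbar C γ : ℝ) (hN : 0 < N) (hxbar : xbar ∈ Set.Ioo 0 N)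
    (hγ : γ ∈ Set.Ioo (0:ℝ) 1) (hC : 0 < C)
    (β : ℝ → ℝ) (hconv : ConvexOn ℝ (Set.Icc 0 N) β) (hβ0 : β 0 = 0)
    (hcont : ContinuousOn β (Set.Icc 0 N))
    (hβb : ∀ x ∈ Set.Icc 0 xbar, |β x| ≤ C * x ^ γ)
    (lam : ℕ → ℝ) (hlam : Monotone lam) (hlampos : ∀ j, 0 < lam j)
    (hlamsum : Summable fun j => lam j ^ (-(γ/(1-γ))))
    (ρ : ℕ → ℝ) (hρa : Antitone ρ) (hρ0 : ∀ j, 0 ≤ ρ j) (hρN : ρ 0 ≤ N)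
    (hE : Summable fun j => lam j * ρ j)
    (Na : ℕ) (hNa : ∀ j, Na ≤ j → ρ j ≤ xbar) :
    ∑' j, |β (ρ j)| ≤ (Na : ℝ) * sSup ((fun x => |β x|) '' Set.Icc 0 N)
      + C * (∑' j, lam j * ρ j) ^ γ * (∑' j, lam j ^ (-(γ/(1-γ)))) ^ (1-γ) := by
  obtain ⟨hγ0, hγ1⟩ := hγ
  have h1γ : (0:ℝ) < 1 - γ := by linarith
  -- basic facts
  have hmem : ∀ j, ρ j ∈ Set.Icc (0:ℝ) N := fun j =>
    ⟨hρ0 j, (hρa (Nat.zero_le j)).trans hρN⟩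
  set M := sSup ((fun x => |β x|) '' Set.Icc 0 N) with hMdef
  have hKc : IsCompact ((fun x => |β x|) '' Set.Icc (0:ℝ) N) :=
    isCompact_Icc.image_of_continuousOn hcont.abs
  have hbdd : BddAbove ((fun x => |β x|) '' Set.Icc (0:ℝ) N) := hKc.bddAbove
  have hM : ∀ j, |β (ρ j)| ≤ M := fun j => le_csSup hbdd ⟨ρ j, hmem j, rfl⟩
  -- shifted sequences
  set r : ℕ → ℝ := fun j => ρ (j + Na) with hr
  set l : ℕ → ℝ := fun j => lam (j + Na) with hl
  set f : ℕ → ℝ := fun j => (l j * r j) ^ γ with hf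
  set g : ℕ → ℝ := fun j => (l j) ^ (-γ) with hg
  have hfnn : ∀ j, 0 ≤ f j := fun j => Real.rpow_nonneg
    (mul_nonneg (hlampos _).le (hρ0 _)) _
  have hgnn : ∀ j, 0 ≤ g j := fun j => Real.rpow_nonneg (hlampos _).le _
  have hpq : (1/γ).HolderConjugate (1/(1-γ)) := by
    rw [Real.holderConjugate_iff]
    constructor
    · rw [lt_div_iff₀ hγ0, one_mul]; exact hγ1
    · rw [one_div, one_div, inv_inv, inv_inv]; ring
  have hEtail : Summable fun j => l j * r j := (summable_nat_add_iff Na).2 hE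
  have hStail : Summable fun j => l j ^ (-(γ/(1-γ))) := (summable_nat_add_iff Na).2 hlamsum
  have hfp : ∀ j, f j ^ (1/γ) = l j * r j := by
    intro j
    show ((l j * r j) ^ γ) ^ (1/γ) = l j * r j
    rw [← Real.rpow_mul (mul_nonneg (hlampos _).le (hρ0 _)),
      mul_one_div_cancel hγ0.ne', Real.rpow_one]
  have hgq : ∀ j, g j ^ (1/(1-γ)) = l j ^ (-(γ/(1-γ))) := by
    intro j
    show ((l j) ^ (-γ)) ^ (1/(1-γ)) = l j ^ (-(γ/(1-γ)))
    rw [← Real.rpow_mul (hlampos _).le]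
    congr 1
    field_simp
  have hfg : ∀ j, f j * g j = r j ^ γ := by
    intro j
    show (l j * r j) ^ γ * (l j) ^ (-γ) = r j ^ γ
    rw [Real.mul_rpow (hlampos _).le (hρ0 _), mul_comm ((l j) ^ γ) _, mul_assoc,
      ← Real.rpow_add (hlampos _), add_neg_cancel, Real.rpow_zero, mul_one]
  have hfp_sum : Summable fun j => f j ^ (1/γ) := by
    simpa only [hfp] using hEtail
  have hgq_sum : Summable fun j => g j ^ (1/(1-γ)) := by
    simpa only [hgq] using hStail
  obtain ⟨hsum_fg, hholder⟩ :=
    Real.summable_and_inner_le_Lp_mul_Lq_tsum_of_nonneg hpq hfnn hgnn hfp_sum hgq_sum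
  have hsum_rγ : Summable fun j => r j ^ γ := by
    simpa only [hfg] using hsum_fg
  -- Hölder's conclusion rewritten
  have hγinv : 1 / (1/γ) = γ := by field_simp
  have h1γinv : 1 / (1/(1-γ)) = 1 - γ := by field_simp
  have holder2 : ∑' j, r j ^ γ ≤
      (∑' j, l j * r j) ^ γ * (∑' j, l j ^ (-(γ/(1-γ)))) ^ (1-γ) := by
    calc ∑' j, r j ^ γ = ∑' j, f j * g j := by simp only [hfg]
      _ ≤ (∑' j, f j ^ (1/γ)) ^ (1/(1/γ)) * (∑' j, g j ^ (1/(1-γ))) ^ (1/(1/(1-γ))) := hholder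
      _ = (∑' j, l j * r j) ^ γ * (∑' j, l j ^ (-(γ/(1-γ)))) ^ (1-γ) := by
          rw [hγinv, h1γinv, tsum_congr hfp, tsum_congr hgq]
  -- tail sums bounded by full sums
  have hEle : ∑' j, l j * r j ≤ ∑' j, lam j * ρ j := by
    have h := Summable.sum_add_tsum_nat_add Na hE
    have hnn : 0 ≤ ∑ i ∈ Finset.range Na, lam i * ρ i :=
      Finset.sum_nonneg fun i _ => mul_nonneg (hlampos i).le (hρ0 i)
    linarith [h]
  have hSle : ∑' j, l j ^ (-(γ/(1-γ))) ≤ ∑' j, lam j ^ (-(γ/(1-γ))) := by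
    have h := Summable.sum_add_tsum_nat_add Na hlamsum
    have hnn : 0 ≤ ∑ i ∈ Finset.range Na, lam i ^ (-(γ/(1-γ))) :=
      Finset.sum_nonneg fun i _ => Real.rpow_nonneg (hlampos i).le _
    linarith [h]
  have hEnn : 0 ≤ ∑' j, l j * r j :=
    tsum_nonneg fun j => mul_nonneg (hlampos _).le (hρ0 _)
  have hSnn : 0 ≤ ∑' j, l j ^ (-(γ/(1-γ))) :=
    tsum_nonneg fun j => Real.rpow_nonneg (hlampos _).le _
  have holder3 : ∑' j, r j ^ γ ≤
      (∑' j, lam j * ρ j) ^ γ * (∑' j, lam j ^ (-(γ/(1-γ)))) ^ (1-γ) := by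
    refine holder2.trans (mul_le_mul ?_ ?_ ?_ ?_)
    · exact Real.rpow_le_rpow hEnn hEle hγ0.le
    · exact Real.rpow_le_rpow hSnn hSle h1γ.le
    · exact Real.rpow_nonneg hSnn _
    · exact Real.rpow_nonneg (hEnn.trans hEle) _
  -- summability of the entropy sum
  have hβtail : ∀ j, |β (ρ (j + Na))| ≤ C * r j ^ γ := by
    intro j
    exact hβb _ ⟨hρ0 _, hNa _ (Nat.le_add_left _ _)⟩
  have hsum_tail : Summable fun j => |β (ρ (j + Na))| :=
    Summable.of_nonneg_of_le (fun j => abs_nonneg _) hβtail (hsum_rγ.mul_left C)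
  have hsumβ : Summable fun j => |β (ρ j)| := (summable_nat_add_iff Na).1 hsum_tail
  -- split the sum
  have hsplit := (Summable.sum_add_tsum_nat_add Na hsumβ).symm
  rw [hsplit]
  have hhead : ∑ i ∈ Finset.range Na, |β (ρ i)| ≤ (Na : ℝ) * M := by
    calc ∑ i ∈ Finset.range Na, |β (ρ i)| ≤ ∑ i ∈ Finset.range Na, M :=
          Finset.sum_le_sum fun i _ => hM i
      _ = (Na : ℝ) * M := by rw [Finset.sum_const, Finset.card_range, nsmul_eq_mul]
  have htailb : ∑' j, |β (ρ (j + Na))| ≤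
      C * (∑' j, lam j * ρ j) ^ γ * (∑' j, lam j ^ (-(γ/(1-γ)))) ^ (1-γ) := by
    calc ∑' j, |β (ρ (j + Na))| ≤ ∑' j, C * r j ^ γ :=
          Summable.tsum_le_tsum hβtail hsum_tail (hsum_rγ.mul_left C)
      _ = C * ∑' j, r j ^ γ := tsum_mul_left
      _ ≤ C * ((∑' j, lam j * ρ j) ^ γ * (∑' j, lam j ^ (-(γ/(1-γ)))) ^ (1-γ)) := by
          exact mul_le_mul_of_nonneg_left holder3 hC.le
      _ = C * (∑' j, lam j * ρ j) ^ γ * (∑' j, lam j ^ (-(γ/(1-γ)))) ^ (1-γ) := by ring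
  linarith
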